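/- Let I = {1,…,N} be a finite index set, θ ∈ ℝ a threshold, m > 0, v : I → ℝ potentials, and H : I × I → ℝ synaptic weights with H j i ≥ m for all i, j ∈ I. Suppose there is a bijection κ : {1,…,N} → I ordering the potentials decreasingly, v(κ(1)) ≥ v(κ(2)) ≥ … ≥ v(κ(N)), such that v(κ(1)) ≥ θ and v(κ(i)) ≥ θ − (i−1)·m for every i ∈ {1,…,N}. Then the fired set of the firing cascade equals all of I, i.e. J = I. -/
import Mathlib


open Finset

open scoped Classical in
/-- Cumulative union `⋃_{q ≤ p} J^q` of the firing cascade. -/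
noncomputable def cumFired {N : ℕ} (θ : ℝ) (v : Fin N → ℝ) (H : Fin N → Fin N → ℝ) :
    ℕ → Finset (Fin N)
  | 0 => Finset.univ.filter (fun i => θ ≤ v i)
  | p + 1 =>
      cumFired θ v H p ∪
        Finset.univ.filter
          (fun i => i ∉ cumFired θ v H p ∧ θ ≤ v i + ∑ j ∈ cumFired θ v H p, H j i)

open scoped Classical in
/-- The set `J^p` of neurons firing at step `p` of the cascade:
`J⁰ = {i : v i ≥ θ}` and
`J^{p+1} = {i ∉ ⋃_{q ≤ p} J^q : v i + ∑_{j ∈ ⋃_{q ≤ p} J^q} H j i ≥ θ}`. -/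
noncomputable def fireStep {N : ℕ} (θ : ℝ) (v : Fin N → ℝ) (H : Fin N → Fin N → ℝ) :
    ℕ → Finset (Fin N)
  | 0 => Finset.univ.filter (fun i => θ ≤ v i)
  | p + 1 =>
      Finset.univ.filter
        (fun i => i ∉ cumFired θ v H p ∧ θ ≤ v i + ∑ j ∈ cumFired θ v H p, H j i)

/-- The fired set `J = ⋃_{p ∈ ℕ} J^p`. -/
def firedSet {N : ℕ} (θ : ℝ) (v : Fin N → ℝ) (H : Fin N → Fin N → ℝ) : Set (Fin N) :=
  {i | ∃ p : ℕ, i ∈ fireStep θ v H p}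

lemma cumFired_mono {N : ℕ} (θ : ℝ) (v : Fin N → ℝ) (H : Fin N → Fin N → ℝ)
    {p q : ℕ} (h : p ≤ q) : cumFired θ v H p ⊆ cumFired θ v H q := by
  induction q with
  | zero => rw [Nat.le_zero.mp h]
  | succ n ih =>
    rcases Nat.le_succ_iff.mp h with h' | rfl
    · exact (ih h').trans Finset.subset_union_left
    · exact subset_rfl

lemma mem_cumFired_exists {N : ℕ} (θ : ℝ) (v : Fin N → ℝ) (H : Fin N → Fin N → ℝ)
    {p : ℕ} {i : Fin N} (h : i ∈ cumFired θ v H p) : ∃ q, i ∈ fireStep θ v H q := by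
  induction p with
  | zero => exact ⟨0, h⟩
  | succ n ih =>
    classical
    rw [cumFired, Finset.mem_union] at h
    rcases h with h | h
    · exact ih h
    · exact ⟨n + 1, h⟩

theorem full_synchronization_of_ordered_potentials {N : ℕ} (hN : 0 < N) (θ m : ℝ)
    (hm : 0 < m) (v : Fin N → ℝ) (H : Fin N → Fin N → ℝ)
    (hH : ∀ i j : Fin N, m ≤ H j i)
    (κ : Fin N ≃ Fin N)
    (hdec : ∀ i j : Fin N, i ≤ j → v (κ j) ≤ v (κ i))
    (htop : θ ≤ v (κ ⟨0, hN⟩))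
    (hbound : ∀ i : Fin N, θ - (i : ℝ) * m ≤ v (κ i)) :
    firedSet θ v H = Set.univ := by
  classical
  have key : ∀ k : ℕ, ∀ h : k < N, κ ⟨k, h⟩ ∈ cumFired θ v H k := by
    intro k
    induction k using Nat.strong_induction_on with
    | _ k ih => ?_
    cases k with
    | zero =>
      intro h
      simp only [cumFired, Finset.mem_filter, Finset.mem_univ, true_and]
      exact htop
    | succ n =>
      intro h
      set i := κ ⟨n + 1, h⟩ with hi
      by_cases hmem : i ∈ cumFired θ v H n
      · exact Finset.subset_union_left hmem
      · rw [cumFired, Finset.mem_union]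
        right
        simp only [Finset.mem_filter, Finset.mem_univ, true_and]
        refine ⟨hmem, ?_⟩
        -- card bound
        have hsub : ∀ j : Fin (n + 1), κ ⟨j.1, lt_trans j.2 h⟩ ∈
            cumFired θ v H n := by
          intro j
          exact cumFired_mono θ v H (Nat.le_of_lt_succ j.2)
            (ih j.1 j.2 (lt_trans j.2 h))
        have hcard : n + 1 ≤ (cumFired θ v H n).card := by
          have := Finset.card_le_card_of_injOn
            (f := fun j : Fin (n + 1) => κ ⟨j.1, lt_trans j.2 h⟩)
            (s := Finset.univ) (t := cumFired θ v H n)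
            (fun j _ => hsub j) ?_
          · simpa using this
          · intro a _ b _ hab
            have := κ.injective hab
            exact Fin.ext (by simpa [Fin.ext_iff] using this)
        have hsum : ((n : ℝ) + 1) * m ≤ ∑ j ∈ cumFired θ v H n, H j i := by
          calc ((n : ℝ) + 1) * m ≤ ((cumFired θ v H n).card : ℝ) * m := by
                apply mul_le_mul_of_nonneg_right _ hm.le
                exact_mod_cast hcard
            _ ≤ ∑ j ∈ cumFired θ v H n, H j i := by
                have h2 := Finset.card_nsmul_le_sum (cumFired θ v H n)
                  (fun j => H j i) m (fun j _ => hH i j)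
                rw [nsmul_eq_mul] at h2
                exact h2
        have hb := hbound ⟨n + 1, h⟩
        have : ((⟨n + 1, h⟩ : Fin N) : ℝ) = (n : ℝ) + 1 := by push_cast; ring
        rw [this] at hb
        linarith
  ext i
  simp only [Set.mem_univ, iff_true, firedSet, Set.mem_setOf_eq]
  obtain ⟨k, rfl⟩ := κ.surjective i
  have hk := key k.1 k.2
  rw [Fin.eta] at hk
  exact mem_cumFired_exists θ v H hk
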